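/- Let D := {z ∈ ℂ : |z| ≤ 1} be the closed unit disk and define, for z ∈ D, ξ_D(z) := (2(|z|²−|z|)+1)⁻¹ · [[2|z|−1, −2·conj(z)·(|z|−1)], [2z(|z|−1), 2|z|−1]]. Then: (i) 2(|z|²−|z|)+1 ≥ 1/2 > 0 for all z ∈ D, so ξ_D is well defined; (ii) ξ_D is continuous on D; (iii) ξ_D(z) ∈ SU(2) for every z ∈ D; (iv) ξ_D(−z) = ξ_D(z)⁻¹ for every z ∈ D, i.e. ξ_D is equivariant for the involution z ↦ −z; (v) ξ_D(0) = −1 (minus the identity matrix) and ξ_D(z) = 1 (the identity matrix) whenever |z| = 1. -/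

import Mathlib

open Complex

/-- The explicit equivariant map `ξ_D` on the closed unit disk:
`ξ_D(z) = (2(|z|²−|z|)+1)⁻¹ · [[2|z|−1, −2·conj(z)·(|z|−1)], [2z(|z|−1), 2|z|−1]]`. -/
noncomputable def xiD (z : ℂ) : Matrix (Fin 2) (Fin 2) ℂ :=
  ((2 * (((‖z‖ : ℂ)) ^ 2 - (‖z‖ : ℂ)) + 1)⁻¹) •
    !![2 * (‖z‖ : ℂ) - 1, -2 * (starRingEnd ℂ z) * ((‖z‖ : ℂ) - 1);
       2 * z * ((‖z‖ : ℂ) - 1), 2 * (‖z‖ : ℂ) - 1]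

private lemma den_real_bound (r : ℝ) : (1 / 2 : ℝ) ≤ 2 * (r ^ 2 - r) + 1 := by
  nlinarith [sq_nonneg (2 * r - 1)]

private lemma den_ne (z : ℂ) :
    (2 * (((‖z‖ : ℂ)) ^ 2 - (‖z‖ : ℂ)) + 1) ≠ 0 := by
  have h : (2 * (((‖z‖ : ℂ)) ^ 2 - (‖z‖ : ℂ)) + 1)
      = ((2 * ((‖z‖) ^ 2 - ‖z‖) + 1 : ℝ) : ℂ) := by push_cast; ring
  rw [h]
  rw [Complex.ofReal_ne_zero]
  have := den_real_bound (‖z‖)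
  linarith

private lemma hzz (z : ℂ) : (starRingEnd ℂ z) * z = ((‖z‖ : ℂ)) ^ 2 := by
  rw [mul_comm, Complex.mul_conj, Complex.normSq_eq_norm_sq]
  push_cast; ring

private lemma star_xiD (z : ℂ) : star (xiD z) = xiD (-z) := by
  have hneg : ‖-z‖ = ‖z‖ := by simp
  ext i j
  fin_cases i <;> fin_cases j <;>
    · simp [xiD, Matrix.star_eq_conjTranspose, Matrix.conjTranspose_apply, map_inv₀,
        Complex.conj_ofReal, hneg]
      try ring

private lemma mul_neg_self (z : ℂ) : xiD z * xiD (-z) = 1 := by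
  have hd := den_ne z
  have hz := hzz z
  have hd' : 2 * (‖z‖ : ℂ) * ((‖z‖ : ℂ) - 1) + 1 ≠ 0 := by convert hd using 1; ring
  have hneg : ‖-z‖ = ‖z‖ := by simp
  ext i j
  fin_cases i <;> fin_cases j <;>
    · simp [xiD, Matrix.mul_apply, Fin.sum_univ_two, Matrix.one_apply, hneg]
      field_simp
      first
      | ring1
      | linear_combination (4 * ((‖z‖ : ℂ) - 1) ^ 2) * hz

private lemma det_xiD (z : ℂ) : (xiD z).det = 1 := by
  have hd := den_ne z
  have hz := hzz z
  have hd' : 2 * (‖z‖ : ℂ) * ((‖z‖ : ℂ) - 1) + 1 ≠ 0 := by convert hd using 1; ring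
  simp [xiD, Matrix.det_fin_two, Matrix.smul_apply]
  field_simp
  linear_combination (4 * ((‖z‖ : ℂ) - 1) ^ 2) * hz

/-- On the closed unit disk `D = {z : |z| ≤ 1}`:
(i) the denominator `2(|z|²−|z|)+1` is positive and `≥ 1/2`, so `ξ_D` is well defined;
(ii) `ξ_D` is continuous on `D`;
(iii) `ξ_D(z) ∈ SU(2)` for every `z ∈ D`;
(iv) `ξ_D(−z) = ξ_D(z)⁻¹` for every `z ∈ D`;
(v) `ξ_D(0) = −1` and `ξ_D(z) = 1` whenever `|z| = 1`. -/
theorem xiD_properties :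
    (∀ z : ℂ, ‖z‖ ≤ 1 →
      (0 : ℝ) < 2 * ((‖z‖) ^ 2 - ‖z‖) + 1 ∧
      (1 / 2 : ℝ) ≤ 2 * ((‖z‖) ^ 2 - ‖z‖) + 1) ∧
    ContinuousOn xiD {z : ℂ | ‖z‖ ≤ 1} ∧
    (∀ z : ℂ, ‖z‖ ≤ 1 → xiD z ∈ Matrix.specialUnitaryGroup (Fin 2) ℂ) ∧
    (∀ z : ℂ, ‖z‖ ≤ 1 → xiD (-z) = (xiD z)⁻¹) ∧
    (xiD 0 = -1 ∧ ∀ z : ℂ, ‖z‖ = 1 → xiD z = 1) := by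
  refine ⟨?_, ?_, ?_, ?_, ?_, ?_⟩
  · intro z _
    have := den_real_bound (‖z‖)
    constructor <;> linarith
  · -- continuity
    have habs : Continuous fun z : ℂ => ((‖z‖ : ℂ)) :=
      Complex.continuous_ofReal.comp continuous_norm
    have hden : Continuous fun z : ℂ =>
        (2 * (((‖z‖ : ℂ)) ^ 2 - (‖z‖ : ℂ)) + 1) := by
      continuity
    have hinv : Continuous fun z : ℂ =>
        (2 * (((‖z‖ : ℂ)) ^ 2 - (‖z‖ : ℂ)) + 1)⁻¹ :=
      hden.inv₀ den_ne
    have : Continuous xiD := by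
      apply continuous_matrix
      intro i j
      fin_cases i <;> fin_cases j <;>
        · simp only [xiD, Matrix.smul_apply, Matrix.cons_val', Matrix.cons_val_zero,
            Matrix.cons_val_one, Matrix.head_cons, Matrix.empty_val',
            Matrix.cons_val_fin_one, Matrix.head_fin_const, smul_eq_mul]
          exact hinv.mul (by continuity)
    exact this.continuousOn
  · intro z _
    rw [Matrix.mem_specialUnitaryGroup_iff]
    refine ⟨?_, det_xiD z⟩
    rw [Matrix.mem_unitaryGroup_iff, star_xiD]
    exact mul_neg_self z
  · intro z _
    exact (Matrix.inv_eq_right_inv (mul_neg_self z)).symm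
  · ext i j
    fin_cases i <;> fin_cases j <;>
      simp [xiD, Matrix.one_apply, Matrix.neg_apply]
  · intro z hz
    ext i j
    fin_cases i <;> fin_cases j <;>
      · simp [xiD, hz, Matrix.one_apply]
        try norm_num
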